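/- Let μ = ρπ be a Borel probability measure on Υ absolutely continuous with respect to π, and let ν be a signed Borel measure on Υ × X finite on Υ × B for every bounded B ⊆ X, such that the Lagrangian satisfies L(μ, ν) < ∞. Then ν is absolutely continuous with respect to π ⊗ m. -/

import Mathlib

open MeasureTheory Filter Topology ENNReal Set Bornology

noncomputable section

namespace PoissonTransport

attribute [local instance] Classical.propDecidable

section Core

variable {X : Type*} [MetricSpace X] [MeasurableSpace X] [BorelSpace X]

/-- A real-valued test function on the base space: continuous, bounded, and
vanishing outside a bounded set (the class `𝒞₀(X)` of the paper). -/
def IsC0 (f : X → ℝ) : Prop :=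
  Continuous f ∧ (∃ C : ℝ, ∀ x, |f x| ≤ C) ∧ ∃ B : Set X, IsBounded B ∧ ∀ x ∉ B, f x = 0

/-- A configuration: a Borel measure that is `ℕ ∪ {∞}`-valued and finite on
bounded (Borel) sets. -/
def IsConfiguration (η : Measure X) : Prop :=
  (∀ B : Set X, MeasurableSet B → η B = ⊤ ∨ ∃ n : ℕ, η B = (n : ℝ≥0∞)) ∧
  ∀ B : Set X, MeasurableSet B → IsBounded B → η B < ⊤

end Core

/-- The configuration space `Υ` over `X`. -/
def Config (X : Type*) [MetricSpace X] [MeasurableSpace X] [BorelSpace X] : Type _ :=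
  {η : Measure X // IsConfiguration η}

section ConfigSec

variable {X : Type*} [MetricSpace X] [MeasurableSpace X] [BorelSpace X]

/-- The vague topology on the configuration space: the initial topology of the
maps `η ↦ ∫ f dη`, `f ∈ 𝒞₀(X)`. -/
instance : TopologicalSpace (Config X) :=
  ⨅ f : {f : X → ℝ // IsC0 f},
    TopologicalSpace.induced (fun η : Config X => ∫ x, f.1 x ∂η.1) inferInstance

instance : MeasurableSpace (Config X) := borel _

instance : BorelSpace (Config X) := ⟨rfl⟩

lemma isConfiguration_add_dirac (η : Config X) (x : X) :
    IsConfiguration (η.1 + Measure.dirac x) := by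
  obtain ⟨hval, hfin⟩ := η.2
  constructor
  · intro B hB
    rw [Measure.add_apply, Measure.dirac_apply' _ hB]
    rcases hval B hB with h | ⟨n, hn⟩
    · left; rw [h]; simp
    · right
      by_cases hx : x ∈ B
      · refine ⟨n + 1, ?_⟩
        rw [hn, Set.indicator_of_mem hx, Pi.one_apply]
        push_cast; ring
      · exact ⟨n, by rw [hn, Set.indicator_of_notMem hx]; simp⟩
  · intro B hB hBb
    rw [Measure.add_apply]
    exact ENNReal.add_lt_top.mpr ⟨hfin B hB hBb, measure_lt_top _ _⟩

/-- `η + δ_x`. -/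
def addPoint (η : Config X) (x : X) : Config X :=
  ⟨η.1 + Measure.dirac x, isConfiguration_add_dirac η x⟩

/-- `η - δ_x` (defined as `η` in the degenerate case where the measure
difference is not a configuration). -/
def removePoint (η : Config X) (x : X) : Config X :=
  if h : IsConfiguration (η.1 - Measure.dirac x) then ⟨_, h⟩ else η

/-- The difference operator `D F (η, x) = F(η + δ_x) - F(η)`. -/
def Dop (F : Config X → ℝ) (p : Config X × X) : ℝ := F (addPoint p.1 p.2) - F p.1

/-- The function `η ↦ exp(-η(h))`. -/
def expIota (h : X → ℝ) (η : Config X) : ℝ := Real.exp (-∫ x, h x ∂η.1)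

/-- A point process with an intensity measure finite on bounded (Borel) sets. -/
def IsLocInt (μ : Measure (Config X)) : Prop :=
  ∀ B : Set X, MeasurableSet B → IsBounded B → ∫⁻ η, η.1 B ∂μ < ⊤

/-- Sublinear growth for functions on the configuration space. -/
def HasSublinearGrowth (F : Config X → ℝ) : Prop :=
  ∃ c : ℝ, 0 < c ∧ ∃ h : X → ℝ, IsC0 h ∧ ∀ η : Config X, |F η| ≤ c * (1 + ∫ x, h x ∂η.1)

end ConfigSec

/-- The space `𝒫₁(Υ)` of locally integrable point processes. -/
def P1 (X : Type*) [MetricSpace X] [MeasurableSpace X] [BorelSpace X] : Type _ :=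
  {μ : Measure (Config X) // IsProbabilityMeasure μ ∧ IsLocInt μ}

section P1sec

variable {X : Type*} [MetricSpace X] [MeasurableSpace X] [BorelSpace X]

/-- The `𝒫₁(Υ)`-topology: initial topology of integration against continuous
functions of sublinear growth. -/
instance : TopologicalSpace (P1 X) :=
  ⨅ F : {F : Config X → ℝ // Continuous F ∧ HasSublinearGrowth F},
    TopologicalSpace.induced (fun μ : P1 X => ∫ η, F.1 η ∂μ.1) inferInstance

/-- The set-function `(A, B) ↦ ∫∫ 1_B(x) 1_A(η - δ_x) η(dx) μ(dη)` defining the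
reduced Campbell measure. -/
def campbellFn (μ : Measure (Config X)) (A : Set (Config X)) (B : Set X) : ℝ≥0∞ :=
  ∫⁻ η, ∫⁻ x, B.indicator (1 : X → ℝ≥0∞) x *
      A.indicator (1 : Config X → ℝ≥0∞) (removePoint η x) ∂η.1 ∂μ

/-- `ν` is the reduced Campbell measure of `μ`. -/
def IsCampbell (μ : Measure (Config X)) (ν : Measure (Config X × X)) : Prop :=
  ∀ (A : Set (Config X)) (B : Set X), MeasurableSet A → MeasurableSet B →
    ν (A ×ˢ B) = campbellFn μ A B

/-- The Mecke identity `C_π = π ⊗ m`, characterizing the Poisson measure with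
intensity `m`. -/
def MeckeId (m : Measure X) (π : Measure (Config X)) : Prop :=
  ∀ (A : Set (Config X)) (B : Set X), MeasurableSet A → MeasurableSet B →
    campbellFn π A B = π A * m B

/-- Finiteness on sets `Υ × B`, `B` bounded Borel. -/
def IsB0Finite (ν : Measure (Config X × X)) : Prop :=
  ∀ B : Set X, MeasurableSet B → IsBounded B → ν (Set.univ ×ˢ B) < ⊤

end P1sec

/-- The space `M⁺_{b,0}(Υ × X)` of nonnegative measures finite on `Υ × B` for
bounded `B`. -/
def Mb0plus (X : Type*) [MetricSpace X] [MeasurableSpace X] [BorelSpace X] : Type _ :=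
  {ν : Measure (Config X × X) // IsB0Finite ν}

section Mb0sec

variable {X : Type*} [MetricSpace X] [MeasurableSpace X] [BorelSpace X]

/-- Test functions on `Υ × X`: continuous, bounded, vanishing outside `Υ × B`
for some bounded `B`. -/
def IsCb0 (u : Config X × X → ℝ) : Prop :=
  Continuous u ∧ (∃ C : ℝ, ∀ p, |u p| ≤ C) ∧
    ∃ B : Set X, IsBounded B ∧ ∀ p : Config X × X, p.2 ∉ B → u p = 0

instance : TopologicalSpace (Mb0plus X) :=
  ⨅ u : {u : Config X × X → ℝ // IsCb0 u},
    TopologicalSpace.induced (fun ν : Mb0plus X => ∫ p, u.1 p ∂ν.1) inferInstance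

/-- The reduced Campbell measure of `μ`, as an element of `M⁺_{b,0}(Υ × X)`. -/
def campbellB0 (μ : Measure (Config X)) : Mb0plus X :=
  if h : ∃ ν : Mb0plus X, IsCampbell μ ν.1 then h.choose
  else ⟨0, fun _ _ _ => by simp⟩

/-- The reduced Campbell measure of `μ`, as a measure on `Υ × X`. -/
def campbellMeasure (μ : Measure (Config X)) : Measure (Config X × X) :=
  if h : ∃ ν : Measure (Config X × X), IsCampbell μ ν then h.choose else 0

end Mb0sec

/-- A signed measure on `Υ × X`, finite on `Υ × B` for bounded `B`, encoded by
its Jordan decomposition. -/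
structure LocSigned (X : Type*) [MetricSpace X] [MeasurableSpace X] [BorelSpace X] where
  pos : Measure (Config X × X)
  neg : Measure (Config X × X)
  singular : pos ⟂ₘ neg
  locFinPos : IsB0Finite pos
  locFinNeg : IsB0Finite neg

section Main

variable {X : Type*} [MetricSpace X] [MeasurableSpace X] [BorelSpace X]

/-- Integration of a function against a `LocSigned` measure. -/
def pairLS (ν : LocSigned X) (u : Config X × X → ℝ) : ℝ :=
  ∫ p, u p ∂ν.pos - ∫ p, u p ∂ν.neg

/-- The (non-local) continuity equation on `[0, T]`, in weak form, tested
against functions `G = exp(-ι_h)` (whose linear span is the class `𝒮` of the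
paper) and `φ ∈ C_c^∞((0,T))`. -/
def SolvesCE (T : ℝ) (μ : ℝ → Measure (Config X)) (ν : ℝ → LocSigned X) : Prop :=
  (∀ t ∈ Set.Icc (0 : ℝ) T, IsProbabilityMeasure (μ t)) ∧
  (∀ B : Set X, MeasurableSet B → IsBounded B →
    ∫⁻ t in Set.Ioc (0 : ℝ) T,
        ((ν t).pos (Set.univ ×ˢ B) + (ν t).neg (Set.univ ×ˢ B)) < ⊤) ∧
  ∀ h : X → ℝ, IsC0 h → (∀ x, 0 ≤ h x) →
    ∀ φ : ℝ → ℝ, ContDiff ℝ (⊤ : ℕ∞) φ → tsupport φ ⊆ Set.Ioo 0 T →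
      (∫ t in Set.Ioc (0 : ℝ) T, deriv φ t * ∫ η, expIota h η ∂(μ t)) +
        (∫ t in Set.Ioc (0 : ℝ) T, φ t * pairLS (ν t) (Dop (expIota h))) = 0

/-- The logarithmic mean `θ(s,t) = (s - t)/(log s - log t)`. -/
def logMean (s t : ℝ) : ℝ :=
  if s = t then s else if s = 0 ∨ t = 0 then 0 else (s - t) / (Real.log s - Real.log t)

/-- `α(s, t, w) = |w|² / θ(s,t)`, with the convention `0/0 = 0`. -/
def alphaFn (s t w : ℝ) : ℝ≥0∞ :=
  if w = 0 then 0 else if logMean s t = 0 then ⊤ else ENNReal.ofReal (w ^ 2 / logMean s t)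

/-- `(a - b)(log a - log b)`, valued in `[0,∞]`. -/
def dlogMul (a b : ℝ) : ℝ≥0∞ :=
  if a = b then 0 else if a = 0 ∨ b = 0 then ⊤
  else ENNReal.ofReal ((a - b) * (Real.log a - Real.log b))

/-- The Lagrangian `L(μ, ν)`, for `ν` given by the pair `(p, n)` (`ν = p - n`),
computed with the dominating measure `σ = μ ⊗ m + C_μ + p + n`. -/
def lagrangian (m : Measure X) (μ : Measure (Config X))
    (p n : Measure (Config X × X)) : ℝ≥0∞ :=
  ∫⁻ q, alphaFn ((μ.prod m).rnDeriv (μ.prod m + campbellMeasure μ + p + n) q).toReal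
      ((campbellMeasure μ).rnDeriv (μ.prod m + campbellMeasure μ + p + n) q).toReal
      (((p.rnDeriv (μ.prod m + campbellMeasure μ + p + n) q).toReal) -
        ((n.rnDeriv (μ.prod m + campbellMeasure μ + p + n) q).toReal))
    ∂(μ.prod m + campbellMeasure μ + p + n)

def lagrangianLS (m : Measure X) (μ : Measure (Config X)) (ν : LocSigned X) : ℝ≥0∞ :=
  lagrangian m μ ν.pos ν.neg

/-- `θ(s) = s log s - s + 1 ≥ 0`. -/
def entθ (s : ℝ) : ℝ := s * Real.log s - s + 1

/-- The relative entropy `H(μ | π) ∈ [0, ∞]` (`π` a probability measure). -/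
def relEnt (μ π : Measure (Config X)) : ℝ≥0∞ :=
  if μ ≪ π then ∫⁻ η, ENNReal.ofReal (entθ ((μ.rnDeriv π η).toReal)) ∂π else ⊤

/-- The modified Fisher information `I(μ | π) = ∫ Dρ · D log ρ d(π ⊗ m)`. -/
def fisher (μ π : Measure (Config X)) (m : Measure X) : ℝ≥0∞ :=
  if μ ≪ π then
    ∫⁻ q : Config X × X,
      dlogMul ((μ.rnDeriv π (addPoint q.1 q.2)).toReal) ((μ.rnDeriv π q.1).toReal)
      ∂(π.prod m)
  else ⊤

/-- The squared transport distance `W²(ξ₀, ξ₁)`: Benamou–Brenier infimum of the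
action over continuous `𝒫₁(Υ)`-valued solutions of the continuity equation
joining `ξ₀` to `ξ₁`. -/
def Wsq (m : Measure X) (ξ₀ ξ₁ : P1 X) : ℝ≥0∞ :=
  ⨅ (γ : ℝ → P1 X) (_ : ContinuousOn γ (Set.Icc 0 1) ∧ γ 0 = ξ₀ ∧ γ 1 = ξ₁)
    (ν : ℝ → LocSigned X) (_ : SolvesCE 1 (fun t => (γ t).1) ν),
    ∫⁻ t in Set.Ioc (0 : ℝ) 1, lagrangianLS m (γ t).1 (ν t)

/-- The transport distance `W`. -/
def Wd (m : Measure X) (ξ₀ ξ₁ : P1 X) : ℝ≥0∞ := Wsq m ξ₀ ξ₁ ^ (2⁻¹ : ℝ)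

/-- The entropic cost `𝒥_ε`. -/
def entCost (m : Measure X) (π : Measure (Config X)) (ε : ℝ≥0∞) (ξ₀ ξ₁ : P1 X) : ℝ≥0∞ :=
  ⨅ (γ : ℝ → P1 X) (_ : ContinuousOn γ (Set.Icc 0 1) ∧ γ 0 = ξ₀ ∧ γ 1 = ξ₁)
    (ν : ℝ → LocSigned X) (_ : SolvesCE 1 (fun t => (γ t).1) ν),
    (∫⁻ t in Set.Ioc (0 : ℝ) 1, lagrangianLS m (γ t).1 (ν t)) +
      ε * ∫⁻ t in Set.Ioc (0 : ℝ) 1, fisher (γ t).1 π m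

/-- Mehler's formula applied to `exp(-ι_h)`:
`P_t (exp (-ι_h)) = exp(-(1 - e^{-t}) ∫ (1 - e^{-h}) dm) · exp(ι_{log(1 - e^{-t}(1 - e^{-h}))})`. -/
def mehlerExp (m : Measure X) (t : ℝ) (h : X → ℝ) (η : Config X) : ℝ :=
  Real.exp (-(1 - Real.exp (-t)) * ∫ x, (1 - Real.exp (-h x)) ∂m) *
    Real.exp (∫ x, Real.log (1 - Real.exp (-t) * (1 - Real.exp (-h x))) ∂η.1)

/-- The dual Ornstein–Uhlenbeck semigroup, characterized via Mehler's formula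
through Laplace functionals (which determine point processes uniquely). -/
def IsOUDual (m : Measure X) (Pstar : ℝ → Measure (Config X) → Measure (Config X)) : Prop :=
  ∀ t : ℝ, 0 ≤ t → ∀ μ : Measure (Config X), IsProbabilityMeasure μ →
    IsProbabilityMeasure (Pstar t μ) ∧
    ∀ h : X → ℝ, IsC0 h → (∀ x, 0 ≤ h x) →
      ∫ η, expIota h η ∂(Pstar t μ) = ∫ η, mehlerExp m t h η ∂μ

/-- The dual Ornstein–Uhlenbeck semigroup acting in the `Υ`-coordinate on
measures on `Υ × X`, characterized via Mehler's formula. -/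
def IsOUDualJoint (m : Measure X)
    (PJ : ℝ → Measure (Config X × X) → Measure (Config X × X)) : Prop :=
  ∀ t : ℝ, 0 ≤ t → ∀ ν : Measure (Config X × X),
    ∀ h : X → ℝ, IsC0 h → (∀ x, 0 ≤ h x) → ∀ B : Set X, MeasurableSet B →
      ∫⁻ p, ENNReal.ofReal (expIota h p.1) * B.indicator (1 : X → ℝ≥0∞) p.2 ∂(PJ t ν) =
        ∫⁻ p, ENNReal.ofReal (mehlerExp m t h p.1) * B.indicator (1 : X → ℝ≥0∞) p.2 ∂ν

/-- The Poisson measure is locally integrable: `I_π = m`. -/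
lemma poisson_locInt {m : Measure X} {π : Measure (Config X)} [IsProbabilityMeasure π]
    (hm : ∀ B : Set X, MeasurableSet B → IsBounded B → m B < ⊤)
    (hM : MeckeId m π) : IsLocInt π := by
  intro B hB hBb
  have h := hM Set.univ B MeasurableSet.univ hB
  have e : campbellFn π Set.univ B = ∫⁻ η, η.1 B ∂π := by
    unfold campbellFn
    refine lintegral_congr fun η => ?_
    simp only [Set.indicator_univ, Pi.one_apply, mul_one]
    exact lintegral_indicator_one hB
  rw [e] at h
  rw [h, measure_univ, one_mul]
  exact hm B hB hBb

end Main

end PoissonTransport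
namespace PoissonTransport

section AuxProof

open Metric TopologicalSpace MeasureTheory.Measure

variable {X : Type*} [MetricSpace X] [MeasurableSpace X] [BorelSpace X]

/-- Integration against a `𝒞₀` function is continuous on the configuration space. -/
lemma continuous_integral_of_isC0 {f : X → ℝ} (hf : IsC0 f) :
    Continuous fun η : Config X => ∫ x, f x ∂η.1 :=
  continuous_iInf_dom (i := ⟨f, hf⟩) continuous_induced_dom

lemma config_eq_zero_of_lt_one (η : Config X) {B : Set X} (hB : MeasurableSet B)
    (h : η.1 B < 1) : η.1 B = 0 := by
  rcases η.2.1 B hB with h' | ⟨k, hk⟩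
  · rw [h'] at h; exact absurd h (by simp)
  · rw [hk] at h ⊢
    norm_cast at h ⊢
    omega

lemma config_one_le (η : Config X) {B : Set X} (hB : MeasurableSet B) (h : η.1 B ≠ 0) :
    1 ≤ η.1 B := by
  by_contra hlt
  exact h (config_eq_zero_of_lt_one η hB (not_le.1 hlt))

lemma real_le_zero_of_forall_le_one_div {a : ℝ} (h : ∀ j : ℕ, a ≤ 1 / (j + 1)) : a ≤ 0 :=
  ge_of_tendsto' tendsto_one_div_add_atTop_nhds_zero_nat h

lemma singleton_eq_iInter_closedBall (x : X) :
    ({x} : Set X) = ⋂ j : ℕ, closedBall x (1 / (j + 1)) := by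
  ext y
  simp only [Set.mem_singleton_iff, Set.mem_iInter, mem_closedBall]
  constructor
  · rintro rfl j
    rw [dist_self]
    positivity
  · intro h
    have h0 : dist y x ≤ 0 := real_le_zero_of_forall_le_one_div h
    rw [← dist_eq_zero]
    exact le_antisymm h0 dist_nonneg

/-- Every configuration gives zero mass to the set of its non-atoms: there is an open
null set containing all points of singleton measure zero. -/
lemma exists_open_null_superset_nonatoms [SeparableSpace X] (η : Config X) :
    ∃ U : Set X, IsOpen U ∧ η.1 U = 0 ∧ ∀ x : X, η.1 {x} = 0 → x ∈ U := by
  haveI : SecondCountableTopology X := UniformSpace.secondCountable_of_separable X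
  have key : ∀ x : X, η.1 {x} = 0 → ∃ r : ℝ, 0 < r ∧ η.1 (ball x r) = 0 := by
    intro x hx
    have hiInf : η.1 {x} = ⨅ j : ℕ, η.1 (closedBall x (1 / (j + 1))) := by
      rw [singleton_eq_iInter_closedBall x]
      refine Antitone.measure_iInter (fun i j hij => closedBall_subset_closedBall ?_)
        (fun j => measurableSet_closedBall.nullMeasurableSet)
        ⟨0, (η.2.2 _ measurableSet_closedBall isBounded_closedBall).ne⟩
      have : (i : ℝ) + 1 ≤ (j : ℝ) + 1 := by exact_mod_cast Nat.succ_le_succ hij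
      exact one_div_le_one_div_of_le (by positivity) this
    have hlt : ⨅ j : ℕ, η.1 (closedBall x (1 / (j + 1))) < 1 := by
      rw [← hiInf, hx]; exact zero_lt_one
    obtain ⟨j, hj⟩ := iInf_lt_iff.1 hlt
    exact ⟨1 / (j + 1), by positivity,
      config_eq_zero_of_lt_one η measurableSet_ball
        (lt_of_le_of_lt (measure_mono ball_subset_closedBall) hj)⟩
  choose! r hrpos hrnull using key
  set S := {x : X | η.1 {x} = 0} with hS
  obtain ⟨T, hTc, hTU⟩ := isOpen_iUnion_countable
    (fun x : S => ball x.1 (r x.1)) (fun _ => isOpen_ball)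
  refine ⟨⋃ x : S, ball x.1 (r x.1), isOpen_iUnion fun _ => isOpen_ball, ?_, ?_⟩
  · rw [← hTU]
    exact (measure_biUnion_null_iff hTc).2 fun i _ => hrnull i.1 i.2
  · intro x hx
    exact Set.mem_iUnion.2 ⟨⟨x, hx⟩, mem_ball_self (hrpos x hx)⟩

/-- Evaluation of a configuration on a closed bounded set is Borel measurable. -/
lemma measurable_config_apply_closed {B : Set X} (hBc : IsClosed B) (hBb : IsBounded B) :
    Measurable fun η : Config X => η.1 B := by
  rcases B.eq_empty_or_nonempty with rfl | hBne
  · simp only [measure_empty]; exact measurable_const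
  have hmB : MeasurableSet B := hBc.measurableSet
  set f : ℕ → X → ℝ := fun j x => max (1 - ((j : ℝ) + 1) * infDist x B) 0 with hf
  have hfc : ∀ j, Continuous (f j) := fun j =>
    (continuous_const.sub (continuous_const.mul (continuous_infDist_pt B))).max continuous_const
  have hf0 : ∀ j x, 0 ≤ f j x := fun j x => le_max_right _ _
  have hf1 : ∀ j x, f j x ≤ 1 := by
    intro j x
    refine max_le ?_ zero_le_one
    have h1 : 0 ≤ ((j : ℝ) + 1) * infDist x B :=
      mul_nonneg (by positivity) infDist_nonneg
    linarith
  have hdist : ∀ (δ : ℝ), 0 ≤ δ → ∀ x, x ∉ cthickening δ B → δ ≤ infDist x B := by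
    intro δ hδ x hx
    rw [mem_cthickening_iff, not_le] at hx
    have h1 : EMetric.infEdist x B ≠ ⊤ := infEdist_ne_top hBne
    have := (ENNReal.toReal_lt_toReal ENNReal.ofReal_ne_top h1).2 hx
    rw [ENNReal.toReal_ofReal hδ] at this
    exact this.le
  have hsupp : ∀ (j : ℕ) (x : X), 1 / ((j : ℝ) + 1) ≤ infDist x B → f j x = 0 := by
    intro j x hx
    refine max_eq_right ?_
    have hj : (0 : ℝ) < (j : ℝ) + 1 := by positivity
    have : (1 : ℝ) = ((j : ℝ) + 1) * (1 / ((j : ℝ) + 1)) := by field_simp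
    nlinarith
  have hvanish : ∀ (j : ℕ) (x : X), x ∉ cthickening (1 / ((j : ℝ) + 1)) B → f j x = 0 := fun j x hx =>
    hsupp j x (hdist _ (by positivity) x hx)
  have hvanish1 : ∀ j x, x ∉ cthickening 1 B → f j x = 0 := by
    intro j x hx
    refine hsupp j x (le_trans ?_ (hdist 1 zero_le_one x hx))
    rw [div_le_one (by positivity)]
    have : (0 : ℝ) ≤ (j : ℝ) := Nat.cast_nonneg j
    linarith
  have hC0 : ∀ j, IsC0 (f j) := by
    intro j
    refine ⟨hfc j, ⟨1, fun x => ?_⟩, cthickening 1 B, hBb.cthickening, hvanish1 j⟩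
    rw [abs_of_nonneg (hf0 j x)]; exact hf1 j x
  have hkey : ∀ η : Config X, η.1 B = ⨅ j : ℕ, ENNReal.ofReal (∫ x, f j x ∂η.1) := by
    intro η
    have hfin : ∀ δ : ℝ, η.1 (cthickening δ B) ≠ ⊤ := fun δ =>
      (η.2.2 _ isClosed_cthickening.measurableSet hBb.cthickening).ne
    have hint : ∀ j, Integrable (f j) η.1 := by
      intro j
      have hgint : Integrable ((cthickening 1 B).indicator fun _ => (1 : ℝ)) η.1 := by
        rw [integrable_indicator_iff isClosed_cthickening.measurableSet]
        exact integrableOn_const (hfin 1)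
      refine hgint.mono' (hfc j).aestronglyMeasurable (Filter.Eventually.of_forall fun x => ?_)
      rw [Real.norm_eq_abs, abs_of_nonneg (hf0 j x)]
      by_cases hx : x ∈ cthickening 1 B
      · rw [Set.indicator_of_mem hx]; exact hf1 j x
      · rw [hvanish1 j x hx, Set.indicator_of_notMem hx]
    have heq : ∀ j, ENNReal.ofReal (∫ x, f j x ∂η.1) = ∫⁻ x, ENNReal.ofReal (f j x) ∂η.1 :=
      fun j => ofReal_integral_eq_lintegral_ofReal (hint j) (Filter.Eventually.of_forall (hf0 j))
    have h2 : ∀ j, η.1 B ≤ ENNReal.ofReal (∫ x, f j x ∂η.1) := by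
      intro j
      rw [heq j, ← lintegral_indicator_one hmB]
      refine lintegral_mono fun x => ?_
      by_cases hx : x ∈ B
      · rw [Set.indicator_of_mem hx]
        have : f j x = 1 := by
          simp only [hf, infDist_zero_of_mem hx, mul_zero, sub_zero]
          exact max_eq_left zero_le_one
        rw [this]; simp
      · simp [Set.indicator_of_notMem hx]
    have h3 : ∀ j, ENNReal.ofReal (∫ x, f j x ∂η.1) ≤
        η.1 (cthickening (1 / ((j : ℝ) + 1)) B) := by
      intro j
      rw [heq j, ← lintegral_indicator_one isClosed_cthickening.measurableSet]
      refine lintegral_mono fun x => ?_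
      by_cases hx : x ∈ cthickening (1 / ((j : ℝ) + 1)) B
      · rw [Set.indicator_of_mem hx, Pi.one_apply]
        exact ENNReal.ofReal_le_one.2 (hf1 j x)
      · rw [hvanish j x hx]; simp
    have h4 : ⨅ j : ℕ, η.1 (cthickening (1 / ((j : ℝ) + 1)) B) = η.1 B := by
      have hInter : ⋂ j : ℕ, cthickening (1 / ((j : ℝ) + 1)) B = B := by
        refine Set.Subset.antisymm ?_ (Set.subset_iInter fun j => self_subset_cthickening B)
        intro x hx
        simp only [Set.mem_iInter] at hx
        have hforall : ∀ j : ℕ, infDist x B ≤ 1 / ((j : ℝ) + 1) := by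
          intro j
          have := (mem_cthickening_iff).1 (hx j)
          have h1 : EMetric.infEdist x B ≠ ⊤ := infEdist_ne_top hBne
          calc infDist x B = (EMetric.infEdist x B).toReal := rfl
            _ ≤ (ENNReal.ofReal (1 / ((j : ℝ) + 1))).toReal :=
                ENNReal.toReal_mono ENNReal.ofReal_ne_top this
            _ = 1 / ((j : ℝ) + 1) := ENNReal.toReal_ofReal (by positivity)
        have h0 : infDist x B ≤ 0 := real_le_zero_of_forall_le_one_div hforall
        have : infDist x B = 0 := le_antisymm h0 infDist_nonneg
        have := (mem_closure_iff_infDist_zero hBne).2 this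
        rwa [hBc.closure_eq] at this
      have hmono : η.1 (⋂ j : ℕ, cthickening (1 / ((j : ℝ) + 1)) B) =
          ⨅ j : ℕ, η.1 (cthickening (1 / ((j : ℝ) + 1)) B) := by
        refine Antitone.measure_iInter (fun i j hij => cthickening_mono ?_ B)
          (fun j => isClosed_cthickening.measurableSet.nullMeasurableSet)
          ⟨0, hfin _⟩
        have : (i : ℝ) + 1 ≤ (j : ℝ) + 1 := by exact_mod_cast Nat.succ_le_succ hij
        exact one_div_le_one_div_of_le (by positivity) this
      rw [hInter] at hmono
      exact hmono.symm
    exact le_antisymm (le_iInf h2) (h4 ▸ iInf_mono h3)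
  have : (fun η : Config X => η.1 B) =
      fun η => ⨅ j : ℕ, ENNReal.ofReal (∫ x, f j x ∂η.1) := funext hkey
  rw [this]
  exact Measurable.iInf fun j =>
    ENNReal.measurable_ofReal.comp (continuous_integral_of_isC0 (hC0 j)).measurable

/-- Any reduced Campbell measure of a finite point process is σ-finite. -/
lemma sigmaFinite_of_isCampbell [SeparableSpace X] {μ : Measure (Config X)}
    [IsFiniteMeasure μ] {ν : Measure (Config X × X)} (h : IsCampbell μ ν) :
    SigmaFinite ν := by
  rcases isEmpty_or_nonempty X with hX | hne
  · haveI : IsEmpty (Config X × X) := ⟨fun p => hX.false p.2⟩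
    haveI : IsFiniteMeasure ν :=
      ⟨by rw [Set.eq_empty_of_isEmpty (Set.univ : Set (Config X × X))]; simp⟩
    infer_instance
  · obtain ⟨x₀⟩ := hne
    set B : ℕ → Set X := fun k => closedBall x₀ ((k : ℝ) + 1) with hB
    set A : ℕ → ℕ → Set (Config X) := fun k j => {η : Config X | η.1 (B k) ≤ (j : ℝ≥0∞)}
      with hA
    have hBm : ∀ k, MeasurableSet (B k) := fun k => measurableSet_closedBall
    have hAm : ∀ k j, MeasurableSet (A k j) := fun k j =>
      (measurable_config_apply_closed isClosed_closedBall isBounded_closedBall)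
        measurableSet_Iic
    refine sigmaFinite_of_countable
      (Set.countable_range fun kj : ℕ × ℕ => A kj.1 kj.2 ×ˢ B kj.1) ?_ ?_
    · rintro s ⟨⟨k, j⟩, rfl⟩
      rw [h _ _ (hAm k j) (hBm k)]
      have hbound : ∀ η : Config X,
          (∫⁻ x, (B k).indicator (1 : X → ℝ≥0∞) x *
            (A k j).indicator (1 : Config X → ℝ≥0∞) (removePoint η x) ∂η.1)
          ≤ (j : ℝ≥0∞) + 1 := by
        intro η
        obtain ⟨U, hUo, hU0, hUS⟩ := exists_open_null_superset_nonatoms η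
        set c : ℝ≥0∞ := if η.1 (B k) ≤ (j : ℝ≥0∞) + 1 then 1 else 0 with hc
        have hpt : ∀ x : X, (B k).indicator (1 : X → ℝ≥0∞) x *
            (A k j).indicator (1 : Config X → ℝ≥0∞) (removePoint η x)
            ≤ (B k).indicator (fun _ => c) x + U.indicator (1 : X → ℝ≥0∞) x := by
          intro x
          by_cases hxB : x ∈ B k
          swap
          · simp [Set.indicator_of_notMem hxB]
          by_cases hxA : removePoint η x ∈ A k j
          swap
          · simp [Set.indicator_of_notMem hxA]
          rw [Set.indicator_of_mem hxB, Set.indicator_of_mem hxA, Pi.one_apply, Pi.one_apply,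
            one_mul, Set.indicator_of_mem hxB]
          by_cases hax : η.1 {x} = 0
          · rw [Set.indicator_of_mem (hUS x hax), Pi.one_apply]
            exact le_add_self
          · have hone : 1 ≤ η.1 {x} := config_one_le η (measurableSet_singleton x) hax
            have hd : Measure.dirac x ≤ η.1 := by
              refine Measure.le_iff.2 fun s hs => ?_
              rw [Measure.dirac_apply' _ hs]
              by_cases hxs : x ∈ s
              · rw [Set.indicator_of_mem hxs, Pi.one_apply]
                exact le_trans hone (measure_mono (Set.singleton_subset_iff.2 hxs))
              · simp [Set.indicator_of_notMem hxs]
            have hBle : η.1 (B k) ≤ (j : ℝ≥0∞) + 1 := by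
              have hxA' := hxA
              by_cases hcfg : IsConfiguration (η.1 - Measure.dirac x) <;> [rw [show removePoint η x = ⟨_, hcfg⟩ from dif_pos hcfg] at hxA'; rw [show removePoint η x = η from dif_neg hcfg] at hxA']
              · have hsub : (η.1 - Measure.dirac x) (B k) ≤ (j : ℝ≥0∞) := hxA'
                rw [Measure.sub_apply (hBm k) hd, Measure.dirac_apply' _ (hBm k),
                  Set.indicator_of_mem hxB, Pi.one_apply] at hsub
                exact tsub_le_iff_right.1 hsub
              · exact le_trans hxA' le_self_add
            rw [hc, if_pos hBle]
            exact le_self_add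
        calc (∫⁻ x, (B k).indicator (1 : X → ℝ≥0∞) x *
              (A k j).indicator (1 : Config X → ℝ≥0∞) (removePoint η x) ∂η.1)
            ≤ ∫⁻ x, ((B k).indicator (fun _ => c) x + U.indicator (1 : X → ℝ≥0∞) x) ∂η.1 :=
              lintegral_mono hpt
          _ = (∫⁻ x, (B k).indicator (fun _ => c) x ∂η.1) +
              ∫⁻ x, U.indicator (1 : X → ℝ≥0∞) x ∂η.1 :=
              lintegral_add_left (measurable_const.indicator (hBm k)) _
          _ = c * η.1 (B k) + η.1 U := by
              rw [lintegral_indicator_one hUo.measurableSet, lintegral_indicator (hBm k) _,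
                setLIntegral_const, mul_comm]
          _ ≤ (j : ℝ≥0∞) + 1 := by
              rw [hU0, add_zero, hc]
              split_ifs with hle
              · rwa [one_mul]
              · simp
      calc campbellFn μ (A k j) (B k)
          ≤ ∫⁻ _η, ((j : ℝ≥0∞) + 1) ∂μ := lintegral_mono hbound
        _ < ⊤ := by
            rw [lintegral_const]
            exact ENNReal.mul_lt_top (by simp) (measure_lt_top μ _)
    · rw [Set.sUnion_range]
      refine Set.eq_univ_iff_forall.2 fun p => ?_
      obtain ⟨k, hk⟩ := exists_nat_ge (dist p.2 x₀)
      obtain ⟨j, hj⟩ := ENNReal.exists_nat_gt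
        ((p.1).2.2 (B k) (hBm k) isBounded_closedBall).ne
      refine Set.mem_iUnion.2 ⟨(k, j), ⟨hj.le, mem_closedBall.2 (hk.trans (by linarith))⟩⟩

lemma sigmaFinite_campbellMeasure [SeparableSpace X] (μ : Measure (Config X))
    [IsFiniteMeasure μ] : SigmaFinite (campbellMeasure μ) := by
  unfold campbellMeasure
  split_ifs with h
  · exact sigmaFinite_of_isCampbell h.choose_spec
  · infer_instance

lemma IsB0Finite.sigmaFinite {ν : Measure (Config X × X)} (h : IsB0Finite ν) :
    SigmaFinite ν := by
  rcases isEmpty_or_nonempty X with hX | hne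
  · haveI : IsEmpty (Config X × X) := ⟨fun p => hX.false p.2⟩
    haveI : IsFiniteMeasure ν :=
      ⟨by rw [Set.eq_empty_of_isEmpty (Set.univ : Set (Config X × X))]; simp⟩
    infer_instance
  · obtain ⟨x₀⟩ := hne
    refine sigmaFinite_of_countable
      (Set.countable_range fun k : ℕ =>
        (Set.univ : Set (Config X)) ×ˢ closedBall x₀ ((k : ℝ) + 1)) ?_ ?_
    · rintro s ⟨k, rfl⟩
      exact h _ measurableSet_closedBall isBounded_closedBall
    · rw [Set.sUnion_range]
      refine Set.eq_univ_iff_forall.2 fun p => ?_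
      obtain ⟨k, hk⟩ := exists_nat_ge (dist p.2 x₀)
      exact Set.mem_iUnion.2 ⟨k, ⟨trivial, mem_closedBall.2 (hk.trans (by linarith))⟩⟩

lemma sigmaFinite_of_bounded_finite {m : Measure X}
    (hm : ∀ B : Set X, MeasurableSet B → IsBounded B → m B < ⊤) : SigmaFinite m := by
  rcases isEmpty_or_nonempty X with hX | hne
  · haveI : IsFiniteMeasure m :=
      ⟨by rw [Set.eq_empty_of_isEmpty (Set.univ : Set X)]; simp⟩
    infer_instance
  · obtain ⟨x₀⟩ := hne
    refine sigmaFinite_of_countable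
      (Set.countable_range fun k : ℕ => closedBall x₀ ((k : ℝ) + 1)) ?_ ?_
    · rintro s ⟨k, rfl⟩
      exact hm _ measurableSet_closedBall isBounded_closedBall
    · rw [Set.sUnion_range]
      refine Set.eq_univ_iff_forall.2 fun x => ?_
      obtain ⟨k, hk⟩ := exists_nat_ge (dist x x₀)
      exact Set.mem_iUnion.2 ⟨k, mem_closedBall.2 (hk.trans (by linarith))⟩

lemma logMean_zero_left (t : ℝ) : logMean 0 t = 0 := by
  unfold logMean
  split_ifs with h1 h2
  · rfl
  · rfl
  · exact absurd (Or.inl rfl) h2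

lemma alphaFn_zero_left {t w : ℝ} (hw : w ≠ 0) : alphaFn 0 t w = ⊤ := by
  unfold alphaFn
  rw [if_neg hw, if_pos (logMean_zero_left t)]

lemma measurable_logMean_comp {α : Type*} [MeasurableSpace α] {a b : α → ℝ}
    (ha : Measurable a) (hb : Measurable b) :
    Measurable fun q => logMean (a q) (b q) := by
  unfold logMean
  refine Measurable.ite (measurableSet_eq_fun ha hb) ha
    (Measurable.ite ?_ measurable_const
      ((ha.sub hb).div ((Real.measurable_log.comp ha).sub (Real.measurable_log.comp hb))))
  have : {q | a q = 0 ∨ b q = 0} = {q | a q = 0} ∪ {q | b q = 0} := Set.setOf_or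
  rw [this]
  exact (measurableSet_eq_fun ha measurable_const).union
    (measurableSet_eq_fun hb measurable_const)

lemma measurable_alphaFn_comp {α : Type*} [MeasurableSpace α] {a b c : α → ℝ}
    (ha : Measurable a) (hb : Measurable b) (hc : Measurable c) :
    Measurable fun q => alphaFn (a q) (b q) (c q) := by
  unfold alphaFn
  refine Measurable.ite (measurableSet_eq_fun hc measurable_const) measurable_const
    (Measurable.ite
      (measurableSet_eq_fun (measurable_logMean_comp ha hb) measurable_const)
      measurable_const ?_)
  exact ENNReal.measurable_ofReal.comp ((hc.pow_const 2).div (measurable_logMean_comp ha hb))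

lemma rnDeriv_ae_zero_of_null {α : Type*} [MeasurableSpace α] (ρ σ : Measure α) {T : Set α}
    (hT : MeasurableSet T) (h : ρ T = 0) :
    ∀ᵐ q ∂σ.restrict T, ρ.rnDeriv σ q = 0 := by
  have hle : ∫⁻ q in T, ρ.rnDeriv σ q ∂σ ≤ ρ T := by
    rw [← withDensity_apply _ hT]
    exact Measure.le_iff'.1 (Measure.withDensity_rnDeriv_le ρ σ) T
  rw [h, nonpos_iff_eq_zero] at hle
  exact (lintegral_eq_zero_iff (Measure.measurable_rnDeriv ρ σ)).1 hle

lemma measure_eq_zero_of_rnDeriv_ae_zero {α : Type*} [MeasurableSpace α] {ρ σ : Measure α}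
    [ρ.HaveLebesgueDecomposition σ] (hρσ : ρ ≪ σ) {T : Set α} (hT : MeasurableSet T)
    (h : ∀ᵐ q ∂σ.restrict T, ρ.rnDeriv σ q = 0) : ρ T = 0 := by
  rw [← Measure.setLIntegral_rnDeriv' hρσ hT]
  exact (lintegral_eq_zero_iff (Measure.measurable_rnDeriv ρ σ)).2 h

lemma main_core {α : Type*} [MeasurableSpace α] (A C p n : Measure α)
    [SigmaFinite A] [SigmaFinite C] [SigmaFinite p] [SigmaFinite n]
    (hL : ∫⁻ q, alphaFn ((A.rnDeriv (A + C + p + n) q).toReal)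
          ((C.rnDeriv (A + C + p + n) q).toReal)
          (((p.rnDeriv (A + C + p + n) q).toReal) - ((n.rnDeriv (A + C + p + n) q).toReal))
          ∂(A + C + p + n) ≠ ⊤)
    {T : Set α} (hT : MeasurableSet T) (hA : A T = 0) (hn : n T = 0) : p T = 0 := by
  set σ := A + C + p + n with hσ
  have hpσ : p ≪ σ :=
    Measure.absolutelyContinuous_of_le
      (Measure.le_add_right (Measure.le_add_left le_rfl) : p ≤ A + C + p + n)
  have hmeas : Measurable fun q => alphaFn ((A.rnDeriv σ q).toReal) ((C.rnDeriv σ q).toReal)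
      (((p.rnDeriv σ q).toReal) - ((n.rnDeriv σ q).toReal)) :=
    measurable_alphaFn_comp (Measure.measurable_rnDeriv A σ).ennreal_toReal
      (Measure.measurable_rnDeriv C σ).ennreal_toReal
      ((Measure.measurable_rnDeriv p σ).ennreal_toReal.sub
        (Measure.measurable_rnDeriv n σ).ennreal_toReal)
  have hae := ae_lt_top hmeas hL
  have h1 := ae_restrict_of_ae (s := T) hae
  have h2 := ae_restrict_of_ae (s := T) (Measure.rnDeriv_lt_top p σ)
  have h3 := rnDeriv_ae_zero_of_null A σ hT hA
  have h4 := rnDeriv_ae_zero_of_null n σ hT hn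
  refine measure_eq_zero_of_rnDeriv_ae_zero hpσ hT ?_
  filter_upwards [h1, h2, h3, h4] with q hq1 hq2 hq3 hq4
  by_contra hne
  have hw : ((p.rnDeriv σ q).toReal) - ((n.rnDeriv σ q).toReal) ≠ 0 := by
    rw [hq4]
    simp only [ENNReal.toReal_zero, sub_zero]
    exact ENNReal.toReal_ne_zero.2 ⟨hne, hq2.ne⟩
  rw [hq3] at hq1
  simp only [ENNReal.toReal_zero] at hq1
  rw [alphaFn_zero_left hw] at hq1
  exact lt_irrefl _ hq1

lemma main_core' {α : Type*} [MeasurableSpace α] (A C p n : Measure α)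
    [SigmaFinite A] [SigmaFinite C] [SigmaFinite p] [SigmaFinite n]
    (hL : ∫⁻ q, alphaFn ((A.rnDeriv (A + C + p + n) q).toReal)
          ((C.rnDeriv (A + C + p + n) q).toReal)
          (((p.rnDeriv (A + C + p + n) q).toReal) - ((n.rnDeriv (A + C + p + n) q).toReal))
          ∂(A + C + p + n) ≠ ⊤)
    {T : Set α} (hT : MeasurableSet T) (hA : A T = 0) (hp : p T = 0) : n T = 0 := by
  set σ := A + C + p + n with hσ
  have hnσ : n ≪ σ :=
    Measure.absolutelyContinuous_of_le (Measure.le_add_left le_rfl : n ≤ A + C + p + n)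
  have hmeas : Measurable fun q => alphaFn ((A.rnDeriv σ q).toReal) ((C.rnDeriv σ q).toReal)
      (((p.rnDeriv σ q).toReal) - ((n.rnDeriv σ q).toReal)) :=
    measurable_alphaFn_comp (Measure.measurable_rnDeriv A σ).ennreal_toReal
      (Measure.measurable_rnDeriv C σ).ennreal_toReal
      ((Measure.measurable_rnDeriv p σ).ennreal_toReal.sub
        (Measure.measurable_rnDeriv n σ).ennreal_toReal)
  have hae := ae_lt_top hmeas hL
  have h1 := ae_restrict_of_ae (s := T) hae
  have h2 := ae_restrict_of_ae (s := T) (Measure.rnDeriv_lt_top n σ)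
  have h3 := rnDeriv_ae_zero_of_null A σ hT hA
  have h4 := rnDeriv_ae_zero_of_null p σ hT hp
  refine measure_eq_zero_of_rnDeriv_ae_zero hnσ hT ?_
  filter_upwards [h1, h2, h3, h4] with q hq1 hq2 hq3 hq4
  by_contra hne
  have hw : ((p.rnDeriv σ q).toReal) - ((n.rnDeriv σ q).toReal) ≠ 0 := by
    rw [hq4, ENNReal.toReal_zero]
    exact sub_ne_zero.2 (Ne.symm (ENNReal.toReal_ne_zero.2 ⟨hne, hq2.ne⟩))
  rw [hq3] at hq1
  simp only [ENNReal.toReal_zero] at hq1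
  rw [alphaFn_zero_left hw] at hq1
  exact lt_irrefl _ hq1

end AuxProof

/-- If `μ = ρπ` is a probability measure absolutely
continuous w.r.t. `π` and `ν ∈ M_{b,0}(Υ × X)` has finite Lagrangian
`L(μ, ν) < ∞`, then `ν` is absolutely continuous with respect to `π ⊗ m`. -/
theorem lagrangian_finite_absolutelyContinuous
    (X : Type*) [MetricSpace X] [CompleteSpace X] [TopologicalSpace.SeparableSpace X]
    [MeasurableSpace X] [BorelSpace X]
    (m : Measure X) (hm : ∀ B : Set X, MeasurableSet B → IsBounded B → m B < ⊤)
    (π : Measure (Config X)) [IsProbabilityMeasure π] (hM : MeckeId m π)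
    (μ : Measure (Config X)) [IsProbabilityMeasure μ] (hac : μ ≪ π)
    (ν : LocSigned X) (hL : lagrangianLS m μ ν < ⊤) :
    ν.pos ≪ π.prod m ∧ ν.neg ≪ π.prod m := by
  haveI hmsf : SigmaFinite m := sigmaFinite_of_bounded_finite hm
  haveI hpsf : SigmaFinite ν.pos := ν.locFinPos.sigmaFinite
  haveI hnsf : SigmaFinite ν.neg := ν.locFinNeg.sigmaFinite
  haveI hCsf : SigmaFinite (campbellMeasure μ) := sigmaFinite_campbellMeasure μ
  have hprod : μ.prod m ≪ π.prod m := hac.prod Measure.AbsolutelyContinuous.rfl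
  have hL' : ∫⁻ q, alphaFn
      (((μ.prod m).rnDeriv (μ.prod m + campbellMeasure μ + ν.pos + ν.neg) q).toReal)
      (((campbellMeasure μ).rnDeriv (μ.prod m + campbellMeasure μ + ν.pos + ν.neg) q).toReal)
      ((((ν.pos).rnDeriv (μ.prod m + campbellMeasure μ + ν.pos + ν.neg) q).toReal) -
        (((ν.neg).rnDeriv (μ.prod m + campbellMeasure μ + ν.pos + ν.neg) q).toReal))
      ∂(μ.prod m + campbellMeasure μ + ν.pos + ν.neg) ≠ ⊤ := by
    have := hL.ne
    unfold lagrangianLS lagrangian at this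
    exact this
  obtain ⟨E, hE, hpE, hnE⟩ := ν.singular
  constructor
  · refine Measure.AbsolutelyContinuous.mk fun S hS hS0 => ?_
    have hT : MeasurableSet (S ∩ Eᶜ) := hS.inter hE.compl
    have h1 : ν.pos (S ∩ Eᶜ) = 0 :=
      main_core (μ.prod m) (campbellMeasure μ) ν.pos ν.neg hL' hT
        (measure_mono_null Set.inter_subset_left (hprod hS0))
        (measure_mono_null Set.inter_subset_right hnE)
    have hsplit : ν.pos S ≤ ν.pos (S ∩ Eᶜ) + ν.pos E := by
      refine le_trans (measure_mono fun x hx => ?_) (measure_union_le _ _)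
      by_cases hxE : x ∈ E
      · exact Or.inr hxE
      · exact Or.inl ⟨hx, hxE⟩
    rw [h1, hpE, add_zero] at hsplit
    exact nonpos_iff_eq_zero.1 hsplit
  · refine Measure.AbsolutelyContinuous.mk fun S hS hS0 => ?_
    have hT : MeasurableSet (S ∩ E) := hS.inter hE
    have h1 : ν.neg (S ∩ E) = 0 :=
      main_core' (μ.prod m) (campbellMeasure μ) ν.pos ν.neg hL' hT
        (measure_mono_null Set.inter_subset_left (hprod hS0))
        (measure_mono_null Set.inter_subset_right hpE)
    have hsplit : ν.neg S ≤ ν.neg (S ∩ E) + ν.neg Eᶜ := by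
      refine le_trans (measure_mono fun x hx => ?_) (measure_union_le _ _)
      by_cases hxE : x ∈ E
      · exact Or.inl ⟨hx, hxE⟩
      · exact Or.inr hxE
    rw [h1, hnE, add_zero] at hsplit
    exact nonpos_iff_eq_zero.1 hsplit

end PoissonTransport
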